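/- Let B ⊂ ℤ be a finite set of integers with |B| ≥ 2, and β an integer not in B. Let p be a prime not dividing γ − β for any γ ∈ B, and set δ = β + p, B′ = B ∪ {δ} = {b₁,...,b_m} with b_m = δ. With n_i as in the partial fraction construction, the rational function f(x) = ∏(x−b_i)^{2n_i} satisfies: f is ramified at every point of B′, the branch locus of f is {0,1,∞}, and f(β) ∉ {0,1,∞}. -/

import Mathlib

open Polynomial Finset OnePoint
open scoped Classical

variable {F : Type*} [Field F]

/-- Evaluation of a rational function at a point of `ℙ¹`. -/
noncomputable def rEval (f : RatFunc F) (a : OnePoint F) : OnePoint F :=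
  Option.elim (a : Option F)
    (if f.denom.degree < f.num.degree then (∞ : OnePoint F)
      else OnePoint.some (f.num.coeff f.denom.natDegree / f.denom.leadingCoeff))
    (fun x => if f.denom.eval x = 0 then (∞ : OnePoint F)
      else OnePoint.some (f.num.eval x / f.denom.eval x))

/-- Ramification index of a rational function at a finite point. -/
noncomputable def ramIdxFin (f : RatFunc F) (x : F) : ℕ :=
  if f.denom.eval x = 0 then f.denom.rootMultiplicity x
  else (f.num - C (f.num.eval x / f.denom.eval x) * f.denom).rootMultiplicity x

/-- The rational function `f(1/x)`. -/
noncomputable def invSub (f : RatFunc F) : RatFunc F :=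
  RatFunc.eval (algebraMap F (RatFunc F)) (RatFunc.X)⁻¹ f

/-- Ramification index of a rational function at a point of `ℙ¹`. -/
noncomputable def ramIdx (f : RatFunc F) (a : OnePoint F) : ℕ :=
  Option.elim (a : Option F) (ramIdxFin (invSub f) 0) (fun x => ramIdxFin f x)

/-- The branch locus of the morphism `ℙ¹ → ℙ¹` induced by a rational function. -/
noncomputable def branchLocus (f : RatFunc F) : Set (OnePoint F) :=
  {w | ∃ a : OnePoint F, rEval f a = w ∧ 2 ≤ ramIdx f a}

/-! ### Auxiliary lemmas -/

lemma ramIdx_some (f : RatFunc F) (x : F) : ramIdx f (OnePoint.some x) = ramIdxFin f x := rfl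

lemma ramIdx_infty (f : RatFunc F) : ramIdx f ∞ = ramIdxFin (invSub f) 0 := rfl

lemma rEval_some (f : RatFunc F) (x : F) :
    rEval f (OnePoint.some x) = (if f.denom.eval x = 0 then (∞ : OnePoint F)
      else OnePoint.some (f.num.eval x / f.denom.eval x)) := rfl

lemma rEval_infty (f : RatFunc F) :
    rEval f ∞ = (if f.denom.degree < f.num.degree then (∞ : OnePoint F)
      else OnePoint.some (f.num.coeff f.denom.natDegree / f.denom.leadingCoeff)) := rfl

lemma ramIdxFin_of_eval_eq_zero {f : RatFunc F} {x : F} (h : f.denom.eval x = 0) :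
    ramIdxFin f x = f.denom.rootMultiplicity x := by
  rw [ramIdxFin, if_pos h]

lemma ramIdxFin_of_eval_ne_zero {f : RatFunc F} {x : F} (h : ¬ f.denom.eval x = 0) :
    ramIdxFin f x
      = (f.num - C (f.num.eval x / f.denom.eval x) * f.denom).rootMultiplicity x := by
  rw [ramIdxFin, if_neg h]

/-- num/denom characterization for a coprime fraction with monic denominator. -/
lemma num_denom_of_coprime {K : Type*} [Field K] {A D : K[X]} (hD : D.Monic)
    (hco : IsCoprime A D) :
    (algebraMap K[X] (RatFunc K) A / algebraMap K[X] (RatFunc K) D).num = A ∧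
    (algebraMap K[X] (RatFunc K) A / algebraMap K[X] (RatFunc K) D).denom = D := by
  set x := algebraMap K[X] (RatFunc K) A / algebraMap K[X] (RatFunc K) D with hx
  have h : x.num * D = A * x.denom :=
    (RatFunc.num_mul_eq_mul_denom_iff hD.ne_zero).2 hx
  have hco' := RatFunc.isCoprime_num_denom x
  have h1 : x.denom ∣ D := by
    refine (hco'.symm).dvd_of_dvd_mul_left ?_
    exact ⟨A, by rw [h]; ring⟩
  have h2 : D ∣ x.denom := by
    refine (hco.symm).dvd_of_dvd_mul_left ?_
    exact ⟨x.num, by rw [← h]; ring⟩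
  have hden : x.denom = D :=
    Polynomial.eq_of_monic_of_associated (RatFunc.monic_denom x) hD
      (associated_of_dvd_dvd h1 h2)
  refine ⟨?_, hden⟩
  have h' := h
  rw [hden] at h'
  exact mul_right_cancel₀ hD.ne_zero h'

/-- root multiplicity of a product of linear powers. -/
lemma rm_prod_pow {K : Type*} [Field K] {ι : Type*} (s : Finset ι) (a : ι → K) (e : ι → ℕ)
    (k : ι) (hk : k ∈ s) (hinj : ∀ i ∈ s, a i = a k → i = k) :
    rootMultiplicity (a k) (∏ i ∈ s, (X - C (a i)) ^ e i) = e k := by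
  rw [← Finset.mul_prod_erase s _ hk]
  have h1 : (X - C (a k)) ^ e k ≠ 0 := pow_ne_zero _ (X_sub_C_ne_zero _)
  have h2 : (∏ i ∈ s.erase k, (X - C (a i)) ^ e i) ≠ 0 :=
    prod_ne_zero_iff.2 fun i _ => pow_ne_zero _ (X_sub_C_ne_zero _)
  rw [rootMultiplicity_mul (mul_ne_zero h1 h2), rootMultiplicity_X_sub_C_pow,
    rootMultiplicity_eq_zero, add_zero]
  simp only [IsRoot.def, eval_prod, eval_pow, eval_sub, eval_X, eval_C]
  apply Finset.prod_ne_zero_iff.2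
  intro i hi
  apply pow_ne_zero
  rw [sub_ne_zero]
  intro heq
  exact (Finset.mem_erase.1 hi).1 (hinj i (Finset.mem_of_mem_erase hi) heq.symm)

lemma derivative_finset_prod' {K : Type*} [Field K] {ι : Type*} [DecidableEq ι] (s : Finset ι) (f : ι → K[X]) :
    derivative (∏ i ∈ s, f i) = ∑ i ∈ s, (∏ j ∈ s.erase i, f j) * derivative (f i) := by
  induction s using Finset.induction_on with
  | empty => simp
  | insert a t ha ih =>
    rw [Finset.prod_insert ha, derivative_mul, ih, Finset.sum_insert ha,
      Finset.erase_insert ha]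
    rw [Finset.mul_sum]
    congr 1
    · ring
    · apply Finset.sum_congr rfl
      intro i hi
      have hne : a ≠ i := fun h => ha (h ▸ hi)
      rw [Finset.erase_insert_of_ne hne, Finset.prod_insert
        (fun h => ha (Finset.mem_of_mem_erase h))]
      ring

lemma deriv_prod_pow {K : Type*} [Field K] {ι : Type*} [DecidableEq ι] (s : Finset ι) (a : ι → K) (e : ι → ℕ)
    (he : ∀ i ∈ s, 1 ≤ e i) :
    derivative (∏ i ∈ s, (X - C (a i)) ^ e i) =
      (∏ i ∈ s, (X - C (a i)) ^ (e i - 1)) *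
        ∑ i ∈ s, C (e i : K) * ∏ j ∈ s.erase i, (X - C (a j)) := by
  rw [derivative_finset_prod', Finset.mul_sum]
  apply Finset.sum_congr rfl
  intro i hi
  rw [derivative_pow, derivative_sub, derivative_X, derivative_C, sub_zero, mul_one]
  rw [← Finset.mul_prod_erase s (fun i => (X - C (a i)) ^ (e i - 1)) hi]
  have key : ∀ j ∈ s.erase i, (X - C (a j)) ^ e j
      = (X - C (a j)) ^ (e j - 1) * (X - C (a j)) := by
    intro j hj
    rw [← pow_succ]
    congr 1
    have := he j (Finset.mem_of_mem_erase hj)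
    omega
  rw [Finset.prod_congr rfl key, Finset.prod_mul_distrib]
  ring

lemma coprime_one_sub_C_mul_X {K : Type*} [Field K] {x y : K} (h : x ≠ y) :
    IsCoprime (1 - C x * X) (1 - C y * X) := by
  have h1 : y - x ≠ 0 := sub_ne_zero.2 (Ne.symm h)
  refine ⟨C (y / (y - x)), C (-x / (y - x)), ?_⟩
  have e1 : C (y / (y - x)) * (1 - C x * X) + C (-x / (y - x)) * (1 - C y * X)
      = C (y / (y - x) + -x / (y - x)) + C (-(y / (y - x) * x + -x / (y - x) * y)) * X := by
    simp only [C_add, C_neg, C_mul]; ring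
  rw [e1]
  have e2 : y / (y - x) + -x / (y - x) = 1 := by field_simp; ring
  have e3 : y / (y - x) * x + -x / (y - x) * y = 0 := by field_simp; ring
  rw [e2, e3, neg_zero, map_zero, zero_mul, add_zero, map_one]

theorem stmt_10 (B : Finset ℤ) (hB : 2 ≤ B.card) (β : ℤ) (hβ : β ∉ B)
    (p : ℕ) (hp : p.Prime) (hpd : ∀ γ ∈ B, ¬ ((p : ℤ) ∣ γ - β))
    (δ : ℤ) (hδ : δ = β + p)
    (m : ℕ) (b : Fin m → ℤ) (hb : Function.Injective b)
    (hrange : Finset.image b univ = insert δ B)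
    (c : ℤ) (hc : c = ∏ q ∈ (univ ×ˢ univ).filter (fun q : Fin m × Fin m => q.1 ≠ q.2),
      (b q.1 - b q.2))
    (n : Fin m → ℤ) (hn : ∀ i, n i * ∏ j ∈ univ.erase i, (b j - b i) = c)
    (f : RatFunc ℂ)
    (hf : f = ∏ i, (RatFunc.X - RatFunc.C ((b i : ℂ))) ^ (2 * n i)) :
    (∀ i, 2 ≤ ramIdx f (OnePoint.some ((b i : ℂ)))) ∧
    branchLocus f = {OnePoint.some (0 : ℂ), OnePoint.some (1 : ℂ), (∞ : OnePoint ℂ)} ∧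
    rEval f (OnePoint.some ((β : ℂ)))
      ∉ ({OnePoint.some (0 : ℂ), OnePoint.some (1 : ℂ), (∞ : OnePoint ℂ)} :
          Set (OnePoint ℂ)) := by
  classical
  -- ## Basic integer facts
  have hp0 : (p : ℤ) ≠ 0 := by exact_mod_cast hp.ne_zero
  have hδB : δ ∉ B := fun hmem => hpd δ hmem (by rw [hδ]; simp)
  have hm : m = B.card + 1 := by
    have h1 := Finset.card_image_of_injective (univ : Finset (Fin m)) hb
    rw [hrange, Finset.card_insert_of_notMem hδB] at h1
    simpa using h1.symm
  have hm3 : 3 ≤ m := by omega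
  have hbmem : ∀ i, b i ∈ insert δ B := fun i =>
    hrange ▸ Finset.mem_image_of_mem b (mem_univ i)
  have hβb : ∀ i, b i ≠ β := by
    intro i h
    rcases Finset.mem_insert.1 (hbmem i) with h1 | h1
    · rw [h, hδ] at h1; omega
    · exact hβ (h ▸ h1)
  obtain ⟨i₀, hi₀⟩ : ∃ i, b i = δ := by
    have h1 : δ ∈ Finset.image b univ := hrange ▸ Finset.mem_insert_self δ B
    rcases Finset.mem_image.1 h1 with ⟨i, _, hi⟩
    exact ⟨i, hi⟩
  have hbB : ∀ j, j ≠ i₀ → b j ∈ B := by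
    intro j hj
    rcases Finset.mem_insert.1 (hbmem j) with h1 | h1
    · exact absurd (hb (h1.trans hi₀.symm)) hj
    · exact h1
  have hc0 : c ≠ 0 := by
    rw [hc]
    apply Finset.prod_ne_zero_iff.2
    rintro ⟨i, j⟩ hij
    simp only [Finset.mem_filter] at hij
    exact sub_ne_zero.2 fun h => hij.2 (hb h)
  have hn0 : ∀ i, n i ≠ 0 := fun i h => hc0 (by rw [← hn i, h, zero_mul])
  -- ## Complex setup
  set bc : Fin m → ℂ := fun i => (b i : ℂ) with hbc_def
  have hbc : Function.Injective bc := by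
    intro i j h
    simp only [hbc_def] at h
    exact hb (by exact_mod_cast h)
  set nc : Fin m → ℂ := fun i => (n i : ℂ) with hnc_def
  set P : Fin m → ℂ[X] := fun i => X - C (bc i) with hP_def
  set e : Fin m → ℕ := fun i => (2 * n i).natAbs with he_def
  have he2 : ∀ i, 2 ≤ e i := by
    intro i
    have := hn0 i
    simp only [he_def]
    omega
  set S : Finset (Fin m) := univ.filter (fun i => 0 < n i) with hS_def
  have hSmem : ∀ i, i ∈ S ↔ 0 < n i := by
    intro i; simp [hS_def]
  have hScmem : ∀ i, i ∈ Sᶜ ↔ n i < 0 := by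
    intro i
    simp only [Finset.mem_compl, hSmem]
    have := hn0 i
    omega
  have heS : ∀ i ∈ S, ((e i : ℤ)) = 2 * n i := by
    intro i hi
    have := (hSmem i).1 hi
    simp only [he_def]
    omega
  have heSc : ∀ i ∈ Sᶜ, ((e i : ℤ)) = -(2 * n i) := by
    intro i hi
    have := (hScmem i).1 hi
    simp only [he_def]
    omega
  set A : ℂ[X] := ∏ i ∈ S, P i ^ e i with hA_def
  set D : ℂ[X] := ∏ i ∈ Sᶜ, P i ^ e i with hD_def
  have hPmonic : ∀ i, (P i).Monic := fun i => monic_X_sub_C _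
  have hAm : A.Monic := monic_prod_of_monic _ _ fun i _ => (hPmonic i).pow _
  have hDm : D.Monic := monic_prod_of_monic _ _ fun i _ => (hPmonic i).pow _
  have hAD : IsCoprime A D := by
    apply IsCoprime.prod_left
    intro i hi
    apply IsCoprime.prod_right
    intro j hj
    have hij : i ≠ j := fun h => (Finset.mem_compl.1 hj) (h ▸ hi)
    exact (pairwise_coprime_X_sub_C hbc hij).pow
  have hfAD : f = algebraMap ℂ[X] (RatFunc ℂ) A / algebraMap ℂ[X] (RatFunc ℂ) D := by
    have hPalg : ∀ i, RatFunc.X - RatFunc.C (bc i) = algebraMap ℂ[X] (RatFunc ℂ) (P i) := by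
      intro i
      rw [hP_def]
      simp only [map_sub, RatFunc.algebraMap_X, RatFunc.algebraMap_C]
    rw [hf, ← Finset.prod_mul_prod_compl S, div_eq_mul_inv]
    congr 1
    · rw [hA_def, map_prod]
      apply Finset.prod_congr rfl
      intro i hi
      rw [hPalg, map_pow, ← zpow_natCast]
      congr 1
      have := heS i hi
      omega
    · rw [hD_def, map_prod, ← Finset.prod_inv_distrib]
      apply Finset.prod_congr rfl
      intro i hi
      rw [hPalg, map_pow, ← zpow_natCast, ← zpow_neg]
      congr 1
      have := heSc i hi
      omega
  obtain ⟨hnum, hden⟩ := num_denom_of_coprime hDm hAD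
  rw [← hfAD] at hnum hden
  -- ## Key polynomial identity
  set kc : ℂ := (-1)^(m-1) * (c : ℂ) with hkc_def
  have hkc0 : kc ≠ 0 := by
    simp only [hkc_def]
    exact mul_ne_zero (pow_ne_zero _ (by norm_num)) (by exact_mod_cast hc0)
  have hprod_monic : ∀ i : Fin m, (∏ j ∈ univ.erase i, P j).Monic :=
    fun i => monic_prod_of_monic _ _ fun j _ => hPmonic j
  have hprod_deg : ∀ i : Fin m, (∏ j ∈ univ.erase i, P j).natDegree = m - 1 := by
    intro i
    rw [natDegree_prod _ _ (fun j _ => (hPmonic j).ne_zero)]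
    have h1 : ∀ j ∈ univ.erase i, (P j).natDegree = 1 := by
      intro j _
      simp only [hP_def]
      exact natDegree_X_sub_C _
    rw [Finset.sum_congr rfl h1]
    simp [Finset.card_erase_of_mem]
  have hg : (∑ i, C (nc i) * ∏ j ∈ univ.erase i, P j) = C kc := by
    have h0 : ((∑ i, C (nc i) * ∏ j ∈ univ.erase i, P j) - C kc) = 0 := by
      apply eq_zero_of_natDegree_lt_card_of_eval_eq_zero _ hbc
      · intro t
        rw [eval_sub, eval_C, eval_finset_sum]
        have hterm : ∀ i ∈ (univ : Finset (Fin m)), i ≠ t →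
            eval (bc t) (C (nc i) * ∏ j ∈ univ.erase i, P j) = 0 := by
          intro i _ hit
          rw [eval_mul, eval_prod]
          apply mul_eq_zero_of_right
          apply Finset.prod_eq_zero (Finset.mem_erase.2 ⟨Ne.symm hit, mem_univ t⟩)
          simp [hP_def]
        rw [Finset.sum_eq_single t (fun i hi hit => hterm i hi hit) (by simp)]
        rw [eval_mul, eval_C, eval_prod]
        have hfac : ∀ j ∈ univ.erase t, eval (bc t) (P j) = (-1) * (bc j - bc t) := by
          intro j _
          simp only [hP_def, eval_sub, eval_X, eval_C]
          ring
        rw [Finset.prod_congr rfl hfac, Finset.prod_mul_distrib, Finset.prod_const,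
          Finset.card_erase_of_mem (mem_univ t), Finset.card_univ, Fintype.card_fin]
        have hhn : nc t * ∏ j ∈ univ.erase t, (bc j - bc t) = (c : ℂ) := by
          have h2 := congrArg (fun z : ℤ => (z : ℂ)) (hn t)
          push_cast at h2
          simp only [hnc_def, hbc_def]
          exact h2
        rw [hkc_def]
        linear_combination ((-1 : ℂ))^(m-1) * hhn
      · rw [Fintype.card_fin]
        refine Nat.lt_of_le_of_lt (natDegree_sub_le _ _) ?_
        refine max_lt ?_ (by simp [natDegree_C]; omega)
        refine Nat.lt_of_le_of_lt (natDegree_sum_le_of_forall_le _ _ (fun i _ => ?_)) (by omega : m - 1 < m)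
        refine le_trans natDegree_mul_le ?_
        rw [natDegree_C, hprod_deg i, zero_add]
    exact sub_eq_zero.1 h0
  have hcoeff1 : ∀ i : Fin m, (∏ j ∈ univ.erase i, P j).coeff (m-1) = 1 := by
    intro i
    have h1 := (hprod_monic i).coeff_natDegree
    rwa [hprod_deg i] at h1
  have hsum1c : (∑ i, nc i) = 0 := by
    have h1 := congrArg (fun q : ℂ[X] => q.coeff (m-1)) hg
    simp only [finset_sum_coeff, coeff_C_mul, coeff_C] at h1
    rw [if_neg (by omega : ¬ (m - 1 = 0))] at h1
    calc ∑ i, nc i = ∑ i, nc i * (∏ j ∈ univ.erase i, P j).coeff (m-1) := by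
          apply Finset.sum_congr rfl
          intro i _
          rw [hcoeff1 i, mul_one]
      _ = 0 := h1
  have hsum1 : (∑ i, n i) = 0 := by
    have h1 := hsum1c
    simp only [hnc_def] at h1
    exact_mod_cast h1
  have hcoeff2 : ∀ i : Fin m, (∏ j ∈ univ.erase i, P j).coeff (m-2)
      = -∑ j ∈ univ.erase i, bc j := by
    intro i
    have h1 : (∏ j ∈ univ.erase i, P j).nextCoeff = -∑ j ∈ univ.erase i, bc j := by
      simp only [hP_def]
      exact prod_X_sub_C_nextCoeff bc
    have h2 : 0 < (∏ j ∈ univ.erase i, P j).natDegree := by rw [hprod_deg i]; omega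
    rw [nextCoeff_of_natDegree_pos h2, hprod_deg i] at h1
    have h3 : m - 1 - 1 = m - 2 := by omega
    rwa [h3] at h1
  have hsumb : (∑ i, nc i * bc i) = 0 := by
    have h1 := congrArg (fun q : ℂ[X] => q.coeff (m-2)) hg
    simp only [finset_sum_coeff, coeff_C_mul, coeff_C] at h1
    rw [if_neg (by omega : ¬ (m - 2 = 0))] at h1
    have h2 : ∀ i ∈ (univ : Finset (Fin m)), nc i * (∏ j ∈ univ.erase i, P j).coeff (m-2)
        = nc i * bc i - nc i * (∑ j, bc j) := by
      intro i _
      rw [hcoeff2 i, Finset.sum_erase_eq_sub (mem_univ i)]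
      ring
    rw [Finset.sum_congr rfl h2, Finset.sum_sub_distrib, ← Finset.sum_mul, hsum1c, zero_mul,
      sub_zero] at h1
    exact h1
  have huniv_ne : (univ : Finset (Fin m)).Nonempty := ⟨⟨0, by omega⟩, mem_univ _⟩
  have hSne : S.Nonempty := by
    by_contra h
    rw [Finset.not_nonempty_iff_eq_empty] at h
    have h1 : ∀ i : Fin m, n i < 0 := by
      intro i
      have h2 := (hSmem i).2
      have h3 := hn0 i
      by_contra h4
      exact (Finset.eq_empty_iff_forall_notMem.1 h (i)) (h2 (by omega))
    have h5 : (∑ i, n i) < 0 := Finset.sum_neg (fun i _ => h1 i) huniv_ne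
    omega
  have hScne : Sᶜ.Nonempty := by
    by_contra h
    rw [Finset.not_nonempty_iff_eq_empty] at h
    have h1 : ∀ i : Fin m, 0 < n i := by
      intro i
      have h2 := (hScmem i).2
      have h3 := hn0 i
      by_contra h4
      exact (Finset.eq_empty_iff_forall_notMem.1 h (i)) (h2 (by omega))
    have h5 : 0 < (∑ i, n i) := Finset.sum_pos (fun i _ => h1 i) huniv_ne
    omega
  -- ## evaluation nonvanishing helper
  have hevalne : ∀ (s : Finset (Fin m)) (E : Fin m → ℕ) (x : ℂ), (∀ j ∈ s, x ≠ bc j) →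
      Polynomial.eval x (∏ i ∈ s, P i ^ E i) ≠ 0 := by
    intro s E x hx
    rw [eval_prod]
    apply Finset.prod_ne_zero_iff.2
    intro j hj
    rw [eval_pow]
    apply pow_ne_zero
    simp only [hP_def, eval_sub, eval_X, eval_C]
    exact sub_ne_zero.2 (hx j hj)
  -- ## Wronskian identity
  have hunion : ∀ (s : Finset (Fin m)), ∀ i ∈ s,
      (∏ j ∈ s.erase i, P j) * (∏ j ∈ sᶜ, P j) = ∏ j ∈ univ.erase i, P j := by
    intro s i hi
    rw [← Finset.prod_union (Disjoint.mono_left (Finset.erase_subset i s)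
      disjoint_compl_right)]
    congr 1
    ext j
    simp only [Finset.mem_union, Finset.mem_erase, Finset.mem_compl, Finset.mem_univ, and_true]
    constructor
    · rintro (⟨h1, _⟩ | h1)
      · exact h1
      · exact fun h => h1 (h ▸ hi)
    · intro h1
      by_cases h2 : j ∈ s
      · exact Or.inl ⟨h1, h2⟩
      · exact Or.inr h2
  set T : ℂ[X] := ∏ i, P i ^ (e i - 1) with hT_def
  have hW : derivative A * D - A * derivative D = C (2 * kc) * T := by
    set TA : ℂ[X] := ∏ i ∈ S, P i ^ (e i - 1) with hTA_def
    set TD : ℂ[X] := ∏ i ∈ Sᶜ, P i ^ (e i - 1) with hTD_def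
    set QA : ℂ[X] := ∏ i ∈ S, P i with hQA_def
    set QD : ℂ[X] := ∏ i ∈ Sᶜ, P i with hQD_def
    set GA : ℂ[X] := ∑ i ∈ S, C ((e i : ℂ)) * ∏ j ∈ S.erase i, P j with hGA_def
    set GD : ℂ[X] := ∑ i ∈ Sᶜ, C ((e i : ℂ)) * ∏ j ∈ Sᶜ.erase i, P j with hGD_def
    have hdA : derivative A = TA * GA := by
      simp only [hA_def, hTA_def, hGA_def, hP_def]
      exact deriv_prod_pow S bc e (fun i _ => by have := he2 i; omega)
    have hdD : derivative D = TD * GD := by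
      simp only [hD_def, hTD_def, hGD_def, hP_def]
      exact deriv_prod_pow Sᶜ bc e (fun i _ => by have := he2 i; omega)
    have hsplit : ∀ s : Finset (Fin m), ∏ i ∈ s, P i ^ e i
        = (∏ i ∈ s, P i ^ (e i - 1)) * ∏ i ∈ s, P i := by
      intro s
      rw [← Finset.prod_mul_distrib]
      apply Finset.prod_congr rfl
      intro i _
      rw [← pow_succ]
      congr 1
      have := he2 i
      omega
    have hAsplit : A = TA * QA := by rw [hA_def, hTA_def, hQA_def]; exact hsplit S
    have hDsplit : D = TD * QD := by rw [hD_def, hTD_def, hQD_def]; exact hsplit Sᶜ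
    have hTsplit : T = TA * TD := by
      rw [hT_def, hTA_def, hTD_def, Finset.prod_mul_prod_compl]
    have hU1 : GA * QD = ∑ i ∈ S, C ((e i : ℂ)) * ∏ j ∈ univ.erase i, P j := by
      rw [hGA_def, hQD_def, Finset.sum_mul]
      apply Finset.sum_congr rfl
      intro i hi
      rw [mul_assoc, hunion S i hi]
    have hU2 : GD * QA = ∑ i ∈ Sᶜ, C ((e i : ℂ)) * ∏ j ∈ univ.erase i, P j := by
      rw [hGD_def, hQA_def, Finset.sum_mul]
      apply Finset.sum_congr rfl
      intro i hi
      rw [mul_assoc]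
      congr 1
      have h1 : (∏ j ∈ S, P j) = ∏ j ∈ Sᶜᶜ, P j := by rw [compl_compl]
      rw [h1]
      exact hunion Sᶜ i hi
    have hfinal : (∑ i ∈ S, C ((e i : ℂ)) * ∏ j ∈ univ.erase i, P j)
        - (∑ i ∈ Sᶜ, C ((e i : ℂ)) * ∏ j ∈ univ.erase i, P j) = C (2 * kc) := by
      have h1 : ∀ i ∈ S, C ((e i : ℂ)) * ∏ j ∈ univ.erase i, P j
          = C 2 * (C (nc i) * ∏ j ∈ univ.erase i, P j) := by
        intro i hi
        have h2 : ((e i : ℂ)) = 2 * nc i := by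
          simp only [hnc_def]
          exact_mod_cast heS i hi
        rw [h2, C_mul, mul_assoc]
      have h4 : ∀ i ∈ Sᶜ, C ((e i : ℂ)) * ∏ j ∈ univ.erase i, P j
          = -(C 2 * (C (nc i) * ∏ j ∈ univ.erase i, P j)) := by
        intro i hi
        have h5 : ((e i : ℂ)) = -(2 * nc i) := by
          simp only [hnc_def]
          exact_mod_cast heSc i hi
        rw [h5]
        simp only [map_neg, C_mul]
        ring
      rw [Finset.sum_congr rfl h1, Finset.sum_congr rfl h4, Finset.sum_neg_distrib,
        sub_neg_eq_add, ← Finset.mul_sum, ← Finset.mul_sum, ← mul_add,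
        Finset.sum_add_sum_compl, hg, ← C_mul]
    calc derivative A * D - A * derivative D
        = TA * GA * (TD * QD) - TA * QA * (TD * GD) := by
          rw [hdA, hdD, hAsplit, hDsplit]
      _ = (TA * TD) * (GA * QD) - (TA * TD) * (GD * QA) := by ring
      _ = (TA * TD) * ((∑ i ∈ S, C ((e i : ℂ)) * ∏ j ∈ univ.erase i, P j)
            - (∑ i ∈ Sᶜ, C ((e i : ℂ)) * ∏ j ∈ univ.erase i, P j)) := by
          rw [hU1, hU2]
          ring
      _ = (TA * TD) * C (2 * kc) := by rw [hfinal]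
      _ = C (2 * kc) * T := by rw [hTsplit]; ring
  -- ## evaluations at the points b i
  have hDevalS : ∀ i ∈ S, D.eval (bc i) ≠ 0 := by
    intro i hi
    rw [hD_def]
    apply hevalne
    intro j hj h
    exact (Finset.mem_compl.1 hj) ((hbc h) ▸ hi)
  have hAevalSc : ∀ i ∈ Sᶜ, A.eval (bc i) ≠ 0 := by
    intro i hi
    rw [hA_def]
    apply hevalne
    intro j hj h
    exact (Finset.mem_compl.1 hi) ((hbc h) ▸ hj)
  have hAevalS : ∀ i ∈ S, A.eval (bc i) = 0 := by
    intro i hi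
    rw [hA_def, eval_prod]
    apply Finset.prod_eq_zero hi
    simp only [hP_def, eval_pow, eval_sub, eval_X, eval_C, sub_self]
    exact zero_pow (by have := he2 i; omega)
  have hDevalSc : ∀ i ∈ Sᶜ, D.eval (bc i) = 0 := by
    intro i hi
    rw [hD_def, eval_prod]
    apply Finset.prod_eq_zero hi
    simp only [hP_def, eval_pow, eval_sub, eval_X, eval_C, sub_self]
    exact zero_pow (by have := he2 i; omega)
  have hram_b : ∀ i, 2 ≤ ramIdx f (OnePoint.some (bc i)) := by
    intro i
    rw [ramIdx_some]
    by_cases hi : i ∈ S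
    · rw [ramIdxFin_of_eval_ne_zero (by rw [hden]; exact hDevalS i hi), hnum, hden,
        hAevalS i hi, zero_div, map_zero, zero_mul, sub_zero, hA_def]
      simp only [hP_def]
      rw [rm_prod_pow S bc e i hi (fun j _ h => hbc h)]
      exact he2 i
    · have hi' : i ∈ Sᶜ := Finset.mem_compl.2 hi
      rw [ramIdxFin_of_eval_eq_zero (by rw [hden]; exact hDevalSc i hi'), hden, hD_def]
      simp only [hP_def]
      rw [rm_prod_pow Sᶜ bc e i hi' (fun j _ h => hbc h)]
      exact he2 i
  have hrevalSc : ∀ i ∈ Sᶜ, rEval f (OnePoint.some (bc i)) = ∞ := by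
    intro i hi
    rw [rEval_some, if_pos (by rw [hden]; exact hDevalSc i hi)]
  have hrevalS : ∀ i ∈ S, rEval f (OnePoint.some (bc i)) = OnePoint.some 0 := by
    intro i hi
    rw [rEval_some, if_neg (by rw [hden]; exact hDevalS i hi), hnum, hAevalS i hi, zero_div]
  -- ## degrees
  have hAdeg : A.natDegree = ∑ i ∈ S, e i := by
    rw [hA_def, natDegree_prod _ _ (fun j _ => pow_ne_zero _ (hPmonic j).ne_zero)]
    apply Finset.sum_congr rfl
    intro i _
    rw [natDegree_pow]
    simp only [hP_def]
    rw [natDegree_X_sub_C, mul_one]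
  have hDdeg : D.natDegree = ∑ i ∈ Sᶜ, e i := by
    rw [hD_def, natDegree_prod _ _ (fun j _ => pow_ne_zero _ (hPmonic j).ne_zero)]
    apply Finset.sum_congr rfl
    intro i _
    rw [natDegree_pow]
    simp only [hP_def]
    rw [natDegree_X_sub_C, mul_one]
  have hDdeg2 : 2 ≤ D.natDegree := by
    obtain ⟨j, hj⟩ := hScne
    rw [hDdeg]
    calc 2 ≤ e j := he2 j
      _ ≤ ∑ i ∈ Sᶜ, e i := Finset.single_le_sum (fun i _ => Nat.zero_le _) hj
  -- ## unramified away from the b i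
  have hunram : ∀ x : ℂ, A.eval x ≠ 0 → D.eval x ≠ 0 → ramIdxFin f x < 2 := by
    intro x hA0 hD0
    have hxb : ∀ i : Fin m, x ≠ bc i := by
      intro i hxi
      by_cases hi : i ∈ S
      · exact hA0 (hxi ▸ hAevalS i hi)
      · exact hD0 (hxi ▸ hDevalSc i (Finset.mem_compl.2 hi))
    rw [ramIdxFin_of_eval_ne_zero (by rw [hden]; exact hD0), hnum, hden]
    set v : ℂ := A.eval x / D.eval x with hv_def
    set q : ℂ[X] := A - C v * D with hq_def
    have hq0 : q ≠ 0 := by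
      intro h
      have h1 : A = C v * D := by
        have := sub_eq_zero.1 (hq_def ▸ h)
        exact this
      have h2 : IsUnit D := by
        apply IsCoprime.isUnit_of_dvd' hAD ?_ dvd_rfl
        exact ⟨C v, by rw [h1]; ring⟩
      have h3 := degree_eq_zero_of_isUnit h2
      have h4 : D.natDegree = 0 := natDegree_eq_zero_iff_degree_le_zero.2 (le_of_eq h3)
      omega
    by_contra hcon
    push_neg at hcon
    have h5 : 1 < rootMultiplicity x q := by omega
    obtain ⟨hr1, hr2⟩ := (one_lt_rootMultiplicity_iff_isRoot hq0).1 h5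
    have hA_eq : A.eval x = v * D.eval x := by
      have h6 : q.eval x = 0 := hr1
      simp only [hq_def, eval_sub, eval_mul, eval_C] at h6
      linear_combination h6
    have hdq : derivative q = derivative A - C v * derivative D := by
      rw [hq_def, derivative_sub, derivative_C_mul]
    have hdA_eq : (derivative A).eval x = v * (derivative D).eval x := by
      have h6 : (derivative q).eval x = 0 := hr2
      rw [hdq] at h6
      simp only [eval_sub, eval_mul, eval_C] at h6
      linear_combination h6
    have hWx : ((derivative A * D - A * derivative D)).eval x = 0 := by
      simp only [eval_sub, eval_mul]
      rw [hdA_eq, hA_eq]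
      ring
    rw [hW] at hWx
    simp only [eval_mul, eval_C] at hWx
    rcases mul_eq_zero.1 hWx with h7 | h7
    · exact (mul_ne_zero two_ne_zero hkc0) h7
    · revert h7
      rw [hT_def]
      exact hevalne univ _ x (fun j _ => hxb j)
  -- ## degrees agree
  have hADdeg : A.natDegree = D.natDegree := by
    rw [hAdeg, hDdeg]
    have h1 : ((∑ i ∈ S, e i : ℕ) : ℤ) = ((∑ i ∈ Sᶜ, e i : ℕ) : ℤ) := by
      push_cast
      rw [Finset.sum_congr rfl heS, Finset.sum_congr rfl heSc]
      have h2 := Finset.sum_add_sum_compl S (fun i => 2 * n i)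
      have h3 : (∑ i : Fin m, 2 * n i) = 0 := by rw [← Finset.mul_sum, hsum1, mul_zero]
      rw [Finset.sum_neg_distrib]
      linarith
    exact_mod_cast h1
  have hrevalinf : rEval f ∞ = OnePoint.some 1 := by
    rw [rEval_infty, hnum, hden]
    have hdeg : ¬ D.degree < A.degree := by
      rw [degree_eq_natDegree hAm.ne_zero, degree_eq_natDegree hDm.ne_zero, hADdeg]
      exact lt_irrefl _
    rw [if_neg hdeg, ← hADdeg, hAm.coeff_natDegree, hDm.leadingCoeff, div_one]
  -- ## the substitution x ↦ 1/x
  set Q : Fin m → ℂ[X] := fun i => 1 - C (bc i) * X with hQ_def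
  set Astar : ℂ[X] := ∏ i ∈ S, Q i ^ e i with hAs_def
  set Dstar : ℂ[X] := ∏ i ∈ Sᶜ, Q i ^ e i with hDs_def
  have hQeval0 : ∀ i, (Q i).eval 0 = 1 := by intro i; simp [hQ_def]
  have hQ0 : ∀ i, Q i ≠ 0 := by
    intro i h
    have h1 := congrArg (fun q : ℂ[X] => q.eval 0) h
    simp only [hQeval0 i, eval_zero] at h1
    exact one_ne_zero h1
  have hAstar0 : Astar.eval 0 = 1 := by
    rw [hAs_def, eval_prod]
    apply Finset.prod_eq_one
    intro i _
    rw [eval_pow, hQeval0, one_pow]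
  have hDstar0 : Dstar.eval 0 = 1 := by
    rw [hDs_def, eval_prod]
    apply Finset.prod_eq_one
    intro i _
    rw [eval_pow, hQeval0, one_pow]
  have hAstarne : Astar ≠ 0 := by
    rw [hAs_def]
    exact Finset.prod_ne_zero_iff.2 fun i _ => pow_ne_zero _ (hQ0 i)
  have hDstarne : Dstar ≠ 0 := by
    rw [hDs_def]
    exact Finset.prod_ne_zero_iff.2 fun i _ => pow_ne_zero _ (hQ0 i)
  have hcop : IsCoprime Astar Dstar := by
    rw [hAs_def, hDs_def]
    apply IsCoprime.prod_left
    intro i hi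
    apply IsCoprime.prod_right
    intro j hj
    have hij : i ≠ j := fun h => (Finset.mem_compl.1 hj) (h ▸ hi)
    exact (coprime_one_sub_C_mul_X (hbc.ne hij)).pow
  have hXinv_ne : ((RatFunc.X : RatFunc ℂ))⁻¹ ≠ 0 := inv_ne_zero RatFunc.X_ne_zero
  have haevalP : ∀ i, (Polynomial.aeval ((RatFunc.X : RatFunc ℂ)⁻¹)) (P i)
      = algebraMap ℂ[X] (RatFunc ℂ) (Q i) * (RatFunc.X : RatFunc ℂ)⁻¹ := by
    intro i
    simp only [hP_def, hQ_def, map_sub, map_mul, map_one, aeval_X, aeval_C,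
      RatFunc.algebraMap_C, RatFunc.algebraMap_X]
    rw [sub_mul, one_mul, mul_assoc, mul_inv_cancel₀ RatFunc.X_ne_zero, mul_one]
    rw [RatFunc.algebraMap_eq_C]
  have haevalA : (Polynomial.aeval ((RatFunc.X : RatFunc ℂ)⁻¹)) A
      = algebraMap ℂ[X] (RatFunc ℂ) Astar * ((RatFunc.X : RatFunc ℂ)⁻¹) ^ (∑ i ∈ S, e i) := by
    rw [hA_def, map_prod, hAs_def, map_prod, ← Finset.prod_pow_eq_pow_sum,
      ← Finset.prod_mul_distrib]
    apply Finset.prod_congr rfl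
    intro i _
    rw [map_pow, haevalP, map_pow, mul_pow]
  have haevalD : (Polynomial.aeval ((RatFunc.X : RatFunc ℂ)⁻¹)) D
      = algebraMap ℂ[X] (RatFunc ℂ) Dstar * ((RatFunc.X : RatFunc ℂ)⁻¹) ^ (∑ i ∈ Sᶜ, e i) := by
    rw [hD_def, map_prod, hDs_def, map_prod, ← Finset.prod_pow_eq_pow_sum,
      ← Finset.prod_mul_distrib]
    apply Finset.prod_congr rfl
    intro i _
    rw [map_pow, haevalP, map_pow, mul_pow]
  have hinvf : invSub f = algebraMap ℂ[X] (RatFunc ℂ) Astar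
      / algebraMap ℂ[X] (RatFunc ℂ) Dstar := by
    have h0 : invSub f = (Polynomial.eval₂ (algebraMap ℂ (RatFunc ℂ)) (RatFunc.X)⁻¹ f.num)
        / (Polynomial.eval₂ (algebraMap ℂ (RatFunc ℂ)) (RatFunc.X)⁻¹ f.denom) := rfl
    have hsumE : (∑ i ∈ S, e i) = (∑ i ∈ Sᶜ, e i) := by rw [← hAdeg, ← hDdeg, hADdeg]
    rw [h0, hnum, hden, ← aeval_def, ← aeval_def, haevalA, haevalD, hsumE,
      mul_div_mul_right _ _ (pow_ne_zero _ hXinv_ne)]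
  set u : ℂ := Dstar.leadingCoeff with hu_def
  have hu0 : u ≠ 0 := by rw [hu_def]; exact leadingCoeff_ne_zero.2 hDstarne
  have hui : (u : ℂ)⁻¹ ≠ 0 := inv_ne_zero hu0
  have hmon : (C u⁻¹ * Dstar).Monic := by
    have h1 := monic_mul_leadingCoeff_inv hDstarne
    rwa [mul_comm] at h1
  have hcop2 : IsCoprime (C u⁻¹ * Astar) (C u⁻¹ * Dstar) :=
    (isCoprime_mul_unit_left (isUnit_C.2 (isUnit_iff_ne_zero.2 hui)) _ _).2 hcop
  have hinvf2 : invSub f = algebraMap ℂ[X] (RatFunc ℂ) (C u⁻¹ * Astar)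
      / algebraMap ℂ[X] (RatFunc ℂ) (C u⁻¹ * Dstar) := by
    rw [hinvf, map_mul, map_mul,
      mul_div_mul_left _ _ (RatFunc.algebraMap_ne_zero (C_ne_zero.2 hui))]
  obtain ⟨hnum2, hden2⟩ := num_denom_of_coprime hmon hcop2
  rw [← hinvf2] at hnum2 hden2
  have hdeneval : (invSub f).denom.eval 0 = u⁻¹ := by
    rw [hden2, eval_mul, eval_C, hDstar0, mul_one]
  have hnumeval : (invSub f).num.eval 0 = u⁻¹ := by
    rw [hnum2, eval_mul, eval_C, hAstar0, mul_one]
  have hdiff0 : Astar - Dstar ≠ 0 := by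
    intro h
    have heq : Astar = Dstar := sub_eq_zero.1 h
    have hunitA : IsUnit Astar := isCoprime_self.1 (by rw [← heq] at hcop; exact hcop)
    have hunitD : IsUnit Dstar := heq ▸ hunitA
    obtain ⟨i1, hi1⟩ := hSne
    obtain ⟨j1, hj1⟩ := hScne
    have hz : ∀ (s : Finset (Fin m)), IsUnit (∏ i ∈ s, Q i ^ e i) →
        ∀ i ∈ s, bc i = 0 := by
      intro s hs i hi
      by_contra hzne
      have hdvd : Q i ^ e i ∣ ∏ j ∈ s, Q j ^ e j := Finset.dvd_prod_of_mem _ hi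
      have h1 : IsUnit (Q i ^ e i) := isUnit_of_dvd_unit hdvd hs
      have hQunit : IsUnit (Q i) := (isUnit_pow_iff (by have := he2 i; omega)).1 h1
      have hdeg := degree_eq_zero_of_isUnit hQunit
      have hcoeff : (Q i).coeff 1 = -(bc i) := by
        simp [hQ_def, coeff_sub, coeff_one, coeff_C_mul]
      have h2 : ((1 : ℕ) : WithBot ℕ) ≤ (Q i).degree :=
        le_degree_of_ne_zero (n := 1) (by rw [hcoeff]; exact neg_ne_zero.2 hzne)
      rw [hdeg] at h2
      norm_num at h2
    have hzS : bc i1 = 0 := hz S (hAs_def ▸ hunitA) i1 hi1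
    have hzSc : bc j1 = 0 := hz Sᶜ (hDs_def ▸ hunitD) j1 hj1
    have h3 : i1 = j1 := hbc (hzS.trans hzSc.symm)
    exact (Finset.mem_compl.1 hj1) (h3 ▸ hi1)
  have hder : ∀ (s : Finset (Fin m)), (derivative (∏ i ∈ s, Q i ^ e i)).eval 0
      = -∑ i ∈ s, (e i : ℂ) * bc i := by
    intro s
    rw [derivative_finset_prod', eval_finset_sum]
    have h1 : ∀ i ∈ s, ((∏ j ∈ s.erase i, Q j ^ e j) * derivative (Q i ^ e i)).eval 0
        = -((e i : ℂ) * bc i) := by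
      intro i hi
      rw [eval_mul]
      have h2 : (∏ j ∈ s.erase i, Q j ^ e j).eval 0 = 1 := by
        rw [eval_prod]
        apply Finset.prod_eq_one
        intro j _
        rw [eval_pow, hQeval0, one_pow]
      have h3 : (derivative (Q i ^ e i)).eval 0 = -((e i : ℂ) * bc i) := by
        rw [derivative_pow]
        have h4 : derivative (Q i) = -(C (bc i)) := by
          simp only [hQ_def]
          rw [derivative_sub, derivative_one, derivative_C_mul, derivative_X, mul_one, zero_sub]
        rw [h4]
        simp only [eval_mul, eval_neg, eval_C, eval_pow]
        rw [hQeval0, one_pow]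
        ring
      rw [h2, h3, one_mul]
    rw [Finset.sum_congr rfl h1, Finset.sum_neg_distrib]
  have hraminf : 2 ≤ ramIdx f ∞ := by
    rw [ramIdx_infty, ramIdxFin_of_eval_ne_zero (by rw [hdeneval]; exact hui)]
    rw [hnumeval, hdeneval, div_self hui, map_one, one_mul, hnum2, hden2]
    have hfactor : C u⁻¹ * Astar - C u⁻¹ * Dstar = C u⁻¹ * (Astar - Dstar) := by ring
    rw [hfactor, rootMultiplicity_mul (mul_ne_zero (C_ne_zero.2 hui) hdiff0),
      rootMultiplicity_eq_zero (by simp [IsRoot.def, hui] : ¬ IsRoot (C u⁻¹) 0), zero_add]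
    have h5 : 1 < rootMultiplicity 0 (Astar - Dstar) := by
      rw [one_lt_rootMultiplicity_iff_isRoot hdiff0]
      constructor
      · simp only [IsRoot.def, eval_sub, hAstar0, hDstar0, sub_self]
      · have hS_eq : ∑ i ∈ S, (e i : ℂ) * bc i = ∑ i ∈ S, 2 * (nc i * bc i) := by
          apply Finset.sum_congr rfl
          intro i hi
          have h6 : ((e i : ℂ)) = 2 * nc i := by
            simp only [hnc_def]
            exact_mod_cast heS i hi
          rw [h6]
          ring
        have hSc_eq : ∑ i ∈ Sᶜ, (e i : ℂ) * bc i = ∑ i ∈ Sᶜ, -(2 * (nc i * bc i)) := by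
          apply Finset.sum_congr rfl
          intro i hi
          have h6 : ((e i : ℂ)) = -(2 * nc i) := by
            simp only [hnc_def]
            exact_mod_cast heSc i hi
          rw [h6]
          ring
        have hsum2 := Finset.sum_add_sum_compl S (fun i => 2 * (nc i * bc i))
        have hsum3 : (∑ i : Fin m, 2 * (nc i * bc i)) = 0 := by
          rw [← Finset.mul_sum]
          have h7 : (∑ i : Fin m, nc i * bc i) = 0 := hsumb
          rw [h7, mul_zero]
        simp only [IsRoot.def, derivative_sub, eval_sub]
        rw [hAs_def, hDs_def, hder S, hder Sᶜ, hS_eq, hSc_eq, Finset.sum_neg_distrib]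
        linear_combination -hsum2 - hsum3
    omega
  -- ## value at β
  set βc : ℂ := (β : ℂ) with hβc_def
  have hβbc : ∀ i, βc ≠ bc i := by
    intro i h
    apply hβb i
    simp only [hβc_def, hbc_def] at h
    exact_mod_cast h.symm
  have hAβ : A.eval βc ≠ 0 := by
    rw [hA_def]
    exact hevalne S e βc (fun j _ => hβbc j)
  have hDβ : D.eval βc ≠ 0 := by
    rw [hD_def]
    exact hevalne Sᶜ e βc (fun j _ => hβbc j)
  have hrevalβ : rEval f (OnePoint.some βc) = OnePoint.some (A.eval βc / D.eval βc) := by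
    rw [rEval_some, if_neg (by rw [hden]; exact hDβ), hnum, hden]
  have hAZ : A.eval βc = ((∏ i ∈ S, (β - b i) ^ e i : ℤ) : ℂ) := by
    rw [hA_def, eval_prod]
    push_cast
    apply Finset.prod_congr rfl
    intro i _
    simp only [hP_def, eval_pow, eval_sub, eval_X, eval_C, hβc_def, hbc_def]
  have hDZ : D.eval βc = ((∏ i ∈ Sᶜ, (β - b i) ^ e i : ℤ) : ℂ) := by
    rw [hD_def, eval_prod]
    push_cast
    apply Finset.prod_congr rfl
    intro i _
    simp only [hP_def, eval_pow, eval_sub, eval_X, eval_C, hβc_def, hbc_def]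
  have hne1 : A.eval βc ≠ D.eval βc := by
    rw [hAZ, hDZ]
    intro h
    have hZ : (∏ i ∈ S, (β - b i) ^ e i) = (∏ i ∈ Sᶜ, (β - b i) ^ e i) := by exact_mod_cast h
    have hpdvd : ∀ (s : Finset (Fin m)), i₀ ∈ s → (p : ℤ) ∣ ∏ i ∈ s, (β - b i) ^ e i := by
      intro s hs
      have h1 : (p : ℤ) ∣ (β - b i₀) ^ e i₀ := by
        rw [hi₀, hδ]
        have h2 : β - (β + (p : ℤ)) = -(p : ℤ) := by ring
        rw [h2]
        exact dvd_pow (dvd_neg.2 dvd_rfl) (by have := he2 i₀; omega)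
      exact h1.trans (Finset.dvd_prod_of_mem _ hs)
    have hpndvd : ∀ (s : Finset (Fin m)), i₀ ∉ s → ¬ (p : ℤ) ∣ ∏ i ∈ s, (β - b i) ^ e i := by
      intro s hs hdvd
      have hprime : Prime ((p : ℤ)) := Nat.prime_iff_prime_int.1 hp
      rcases (hprime.dvd_finset_prod_iff _).1 hdvd with ⟨i, hi, hdvd2⟩
      have h2 : (p : ℤ) ∣ β - b i := hprime.dvd_of_dvd_pow hdvd2
      have h3 : b i ∈ B := hbB i (fun hh => hs (hh ▸ hi))
      apply hpd (b i) h3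
      have h4 : b i - β = -(β - b i) := by ring
      rw [h4]
      exact dvd_neg.2 h2
    by_cases hi0 : i₀ ∈ S
    · exact hpndvd Sᶜ (fun hh => (Finset.mem_compl.1 hh) hi0) (hZ ▸ hpdvd S hi0)
    · exact hpndvd S hi0 (hZ ▸ hpdvd Sᶜ (Finset.mem_compl.2 hi0))
  have hfβ : rEval f (OnePoint.some βc)
      ∉ ({OnePoint.some (0 : ℂ), OnePoint.some (1 : ℂ), (∞ : OnePoint ℂ)} :
          Set (OnePoint ℂ)) := by
    rw [hrevalβ]
    intro hmem
    simp only [Set.mem_insert_iff, Set.mem_singleton_iff] at hmem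
    rcases hmem with h | h | h
    · have h1 : A.eval βc / D.eval βc = 0 := (OnePoint.some_eq_iff _ _).1 h
      exact hAβ (by rcases div_eq_zero_iff.1 h1 with h2 | h2
                    · exact h2
                    · exact absurd h2 hDβ)
    · have h1 : A.eval βc / D.eval βc = 1 := (OnePoint.some_eq_iff _ _).1 h
      exact hne1 ((div_eq_one_iff_eq hDβ).1 h1)
    · exact OnePoint.coe_ne_infty _ h
  -- ## branch locus
  have hbranch : branchLocus f
      = ({OnePoint.some (0 : ℂ), OnePoint.some (1 : ℂ), (∞ : OnePoint ℂ)} :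
          Set (OnePoint ℂ)) := by
    ext w
    constructor
    · rintro ⟨a, hev, hram⟩
      cases a with
      | infty =>
        have hev' : rEval f ∞ = w := hev
        rw [hrevalinf] at hev'
        rw [← hev']
        simp
      | coe x =>
        have hev' : rEval f (OnePoint.some x) = w := hev
        have hram' : 2 ≤ ramIdxFin f x := hram
        by_cases hD0 : D.eval x = 0
        · rw [rEval_some, if_pos (by rw [hden]; exact hD0)] at hev'
          rw [← hev']
          simp
        · by_cases hA0 : A.eval x = 0
          · rw [rEval_some, if_neg (by rw [hden]; exact hD0), hnum, hA0, zero_div] at hev'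
            rw [← hev']
            simp
          · have h1 := hunram x hA0 hD0
            omega
    · intro hmem
      simp only [Set.mem_insert_iff, Set.mem_singleton_iff] at hmem
      rcases hmem with h | h | h
      · obtain ⟨i1, hi1⟩ := hSne
        exact ⟨OnePoint.some (bc i1), by rw [hrevalS i1 hi1, h], hram_b i1⟩
      · exact ⟨∞, by rw [hrevalinf, h], hraminf⟩
      · obtain ⟨j1, hj1⟩ := hScne
        exact ⟨OnePoint.some (bc j1), by rw [hrevalSc j1 hj1, h], hram_b j1⟩
  exact ⟨fun i => hram_b i, hbranch, hfβ⟩
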